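/- arXiv:2009.12290 — 2 statements merged into one kernel-verified Lean document; each statement's English description precedes it below -/
import Mathlib

section
/- Let A be an n×n irreducible completely positive matrix of rank 2. Then A has a unique CP representation if and only if A has a zero off-diagonal entry a_{ij} = 0 (i ≠ j) such that row i and column j of A are nonzero. Moreover if A has no such zero off-diagonal entry, then A has infinitely many minimal CP representations. -/
open Matrix

/-- A CP representation of `A`: a multiset of nonnegative, nonzero, pairwise linearly
independent vectors whose rank-one outer products sum to `A`. Counted as a multiset,
i.e. up to reordering of the summands (columns). -/
def IsCPRep {n : ℕ} (A : Matrix (Fin n) (Fin n) ℝ) (L : Multiset (Fin n → ℝ)) : Prop :=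
  (∀ b ∈ L, ∀ i, 0 ≤ b i) ∧ (∀ b ∈ L, b ≠ 0) ∧
  L.Pairwise (fun b c => LinearIndependent ℝ ![b, c]) ∧
  (L.map fun b => vecMulVec b b).sum = A

/-- `A` is completely positive. -/
def IsCP {n : ℕ} (A : Matrix (Fin n) (Fin n) ℝ) : Prop := ∃ L, IsCPRep A L

/-- The cp-rank: minimal number of rank-one summands in a CP representation. -/
noncomputable def cpRank {n : ℕ} (A : Matrix (Fin n) (Fin n) ℝ) : ℕ :=
  sInf {k | ∃ L, IsCPRep A L ∧ Multiset.card L = k}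

/-- A minimal CP representation: a CP representation with `cpRank A` summands. -/
def IsMinCPRep {n : ℕ} (A : Matrix (Fin n) (Fin n) ℝ) (L : Multiset (Fin n → ℝ)) : Prop :=
  IsCPRep A L ∧ Multiset.card L = cpRank A

/-- The graph of a symmetric matrix: `i ~ j` iff `i ≠ j` and `A i j ≠ 0`. -/
def matGraph {n : ℕ} (A : Matrix (Fin n) (Fin n) ℝ) : SimpleGraph (Fin n) where
  Adj i j := i ≠ j ∧ (A i j ≠ 0 ∨ A j i ≠ 0)
  symm := ⟨by intro _ _ h; exact ⟨h.1.symm, h.2.symm⟩⟩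
  loopless := ⟨by intro _ h; exact h.1 rfl⟩

/-- The comparison matrix `M(A)`. -/
noncomputable def compMatrix {n : ℕ} (A : Matrix (Fin n) (Fin n) ℝ) : Matrix (Fin n) (Fin n) ℝ :=
  fun i j => if i = j then |A i j| else -|A i j|
open Matrix

section helpers
variable {α : Type*}

lemma msum_nonneg {L : Multiset α} {f : α → ℝ} (h : ∀ a ∈ L, 0 ≤ f a) :
    0 ≤ (L.map f).sum :=
  Multiset.sum_nonneg (by intro x hx; obtain ⟨a, ha, rfl⟩ := Multiset.mem_map.1 hx; exact h a ha)

lemma term_eq_zero_of_sum_eq_zero {L : Multiset α} {f : α → ℝ} (h : ∀ a ∈ L, 0 ≤ f a)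
    (hs : (L.map f).sum = 0) {a : α} (ha : a ∈ L) : f a = 0 := by
  obtain ⟨M, rfl⟩ := Multiset.exists_cons_of_mem ha
  rw [Multiset.map_cons, Multiset.sum_cons] at hs
  have h1 : 0 ≤ (M.map f).sum := msum_nonneg (fun b hb => h b (Multiset.mem_cons_of_mem hb))
  have h2 : 0 ≤ f a := h a (Multiset.mem_cons_self _ _)
  linarith

lemma list_pair_of_mem_erase [DecidableEq α] {R : α → α → Prop}
    (hsym : ∀ a b, R a b → R b a) :
    ∀ {l : List α}, l.Pairwise R → ∀ {a b : α}, a ∈ l → b ∈ l.erase a → R a b := by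
  intro l
  induction l with
  | nil => intro _ a b _ hb; simp at hb
  | cons x xs ih =>
    intro hp a b ha hb
    rcases eq_or_ne x a with rfl | hxa
    · rw [List.erase_cons_head] at hb
      exact List.rel_of_pairwise_cons hp hb
    · rw [List.erase_cons_tail (by simpa using hxa)] at hb
      have ha' : a ∈ xs := by
        rcases List.mem_cons.1 ha with rfl | h
        · exact absurd rfl hxa
        · exact h
      rcases List.mem_cons.1 hb with rfl | hb'
      · exact hsym _ _ (List.rel_of_pairwise_cons hp ha')
      · exact ih (List.Pairwise.of_cons hp) ha' hb'

lemma mpair_of_mem_erase [DecidableEq α] {R : α → α → Prop}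
    (hsym : ∀ a b, R a b → R b a) {L : Multiset α} (hp : L.Pairwise R)
    {a b : α} (ha : a ∈ L) (hb : b ∈ L.erase a) : R a b := by
  obtain ⟨l, rfl, hl⟩ := hp
  have hb2 : b ∈ (↑(l.erase a) : Multiset α) := by rwa [Multiset.coe_erase] at hb
  exact list_pair_of_mem_erase hsym hl (by exact_mod_cast ha) (by exact_mod_cast hb2)

end helpers

section li
variable {n : ℕ} {x y : Fin n → ℝ}

lemma li_symm (h : LinearIndependent ℝ ![x, y]) : LinearIndependent ℝ ![y, x] := by
  rw [LinearIndependent.pair_iff] at h ⊢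
  intro s t hst
  have := h t s (by rw [add_comm]; exact hst)
  exact ⟨this.2, this.1⟩

lemma li_left_ne_zero (h : LinearIndependent ℝ ![x, y]) : x ≠ 0 := by
  rintro rfl
  rw [LinearIndependent.pair_iff] at h
  have := (h 1 0 (by simp)).1
  norm_num at this

lemma li_transform (h : LinearIndependent ℝ ![x, y]) {e f g k : ℝ}
    (hdet : e * k - f * g ≠ 0) :
    LinearIndependent ℝ ![e • x + f • y, g • x + k • y] := by
  rw [LinearIndependent.pair_iff] at h ⊢
  intro s t hst
  have hrel : (s * e + t * g) • x + (s * f + t * k) • y = 0 := by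
    rw [← hst]; module
  have h2 := h _ _ hrel
  constructor
  · have : s * (e * k - f * g) = k * (s * e + t * g) - g * (s * f + t * k) := by ring
    have hz : s * (e * k - f * g) = 0 := by rw [this, h2.1, h2.2]; ring
    exact (mul_eq_zero.1 hz).resolve_right hdet
  · have : t * (e * k - f * g) = e * (s * f + t * k) - f * (s * e + t * g) := by ring
    have hz : t * (e * k - f * g) = 0 := by rw [this, h2.1, h2.2]; ring
    exact (mul_eq_zero.1 hz).resolve_right hdet

lemma not_li_smul (a : ℝ) (hy : x = a • y) : ¬ LinearIndependent ℝ ![x, y] := by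
  rw [LinearIndependent.pair_iff]
  intro h
  have := (h 1 (-a) (by rw [hy]; module)).1
  norm_num at this
end li

variable {n : ℕ} {A : Matrix (Fin n) (Fin n) ℝ} {L : Multiset (Fin n → ℝ)}

lemma msum_entry (L : Multiset (Fin n → ℝ)) (k l : Fin n) :
    ((L.map fun b => vecMulVec b b).sum) k l = (L.map fun c => c k * c l).sum := by
  induction L using Multiset.induction_on with
  | empty => simp
  | cons a s ih =>
    simp only [Multiset.map_cons, Multiset.sum_cons, Matrix.add_apply, vecMulVec_apply, ih]

lemma cp_entry (hL : (L.map fun b => vecMulVec b b).sum = A) (k l : Fin n) :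
    A k l = (L.map fun c => c k * c l).sum := by
  rw [← hL, msum_entry]

lemma vecMulVec_mulVec' (b v : Fin n → ℝ) : vecMulVec b b *ᵥ v = (b ⬝ᵥ v) • b := by
  funext k
  simp only [mulVec, vecMulVec_apply, dotProduct, Pi.smul_apply, smul_eq_mul]
  rw [Finset.sum_mul]
  exact Finset.sum_congr rfl fun l _ => by ring

lemma dot_msum' (L : Multiset (Fin n → ℝ)) (v : Fin n → ℝ) :
    v ⬝ᵥ ((L.map fun b => vecMulVec b b).sum *ᵥ v) = (L.map fun c => (c ⬝ᵥ v) ^ 2).sum := by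
  induction L using Multiset.induction_on with
  | empty => simp
  | cons a s ih =>
    simp only [Multiset.map_cons, Multiset.sum_cons, add_mulVec, dotProduct_add,
      vecMulVec_mulVec', dotProduct_smul, smul_eq_mul, ih]
    rw [dotProduct_comm v a]
    ring

lemma rep_dot_ker (hrep : IsCPRep A L) {v : Fin n → ℝ} (hv : A *ᵥ v = 0) :
    ∀ c ∈ L, c ⬝ᵥ v = 0 := by
  intro c hc
  have h0 : (L.map fun c => (c ⬝ᵥ v) ^ 2).sum = 0 := by
    rw [← dot_msum', hrep.2.2.2, hv, dotProduct_zero]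
  have := term_eq_zero_of_sum_eq_zero (fun a _ => sq_nonneg (a ⬝ᵥ v)) h0 hc
  exact pow_eq_zero_iff (by norm_num) |>.mp this
lemma entry_nonneg (hrep : IsCPRep A L) (k l : Fin n) : 0 ≤ A k l := by
  rw [cp_entry hrep.2.2.2]
  exact msum_nonneg (fun c hc => mul_nonneg (hrep.1 c hc k) (hrep.1 c hc l))

lemma two_le_n (hrank : A.rank = 2) : 2 ≤ n := hrank ▸ A.rank_le_height

lemma row_zero_of_diag_zero (hrep : IsCPRep A L) {i : Fin n} (hii : A i i = 0) :
    ∀ l, A i l = 0 ∧ A l i = 0 := by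
  have hci : ∀ c ∈ L, c i = 0 := by
    intro c hc
    have h0 : (L.map fun c => c i * c i).sum = 0 := by rw [← cp_entry hrep.2.2.2, hii]
    exact mul_self_eq_zero.1 (term_eq_zero_of_sum_eq_zero
      (fun a ha => mul_nonneg (hrep.1 a ha i) (hrep.1 a ha i)) h0 hc)
  intro l
  constructor
  · rw [cp_entry hrep.2.2.2]
    rw [show (0:ℝ) = ((L.map fun c => (0:ℝ)).sum) by simp]
    congr 1
    exact Multiset.map_congr rfl (fun c hc => by rw [hci c hc, zero_mul])
  · rw [cp_entry hrep.2.2.2]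
    rw [show (0:ℝ) = ((L.map fun c => (0:ℝ)).sum) by simp]
    congr 1
    exact Multiset.map_congr rfl (fun c hc => by rw [hci c hc, mul_zero])

lemma diag_pos (hrep : IsCPRep A L) (hirr : (matGraph A).Connected) (hrank : A.rank = 2)
    (i : Fin n) : 0 < A i i := by
  rcases (entry_nonneg hrep i i).lt_or_eq with h | h
  · exact h
  exfalso
  have hrow := row_zero_of_diag_zero hrep h.symm
  have h2n : 2 ≤ n := two_le_n hrank
  obtain ⟨j, hj⟩ := Fintype.exists_ne_of_one_lt_card (by simpa using (show 1 < n by omega)) i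
  obtain ⟨w⟩ := hirr.preconnected i j
  cases w with
  | nil => exact hj rfl
  | cons h' p => rcases h'.2 with h2 | h2 <;> [exact h2 (hrow _).1; exact h2 (hrow _).2]

lemma card_ge_two (hrank : A.rank = 2) (hrep : IsCPRep A L) : 2 ≤ Multiset.card L := by
  by_contra hlt
  push_neg at hlt
  interval_cases h : Multiset.card L
  · rw [Multiset.card_eq_zero] at h
    rw [h] at hrep
    have : A = 0 := by rw [← hrep.2.2.2]; simp
    rw [this, Matrix.rank_zero] at hrank
    norm_num at hrank
  · rw [Multiset.card_eq_one] at h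
    obtain ⟨c, rfl⟩ := h
    have hA : A = vecMulVec c c := by rw [← hrep.2.2.2]; simp
    have : A.rank ≤ 1 := by
      rw [hA, vecMulVec_eq (Fin 1)]
      exact (Matrix.rank_mul_le_left _ _).trans ((Matrix.rank_le_card_width _).trans (by simp))
    omega

lemma rep_span (hrank : A.rank = 2) (hrep : IsCPRep A L) {s t : Fin n → ℝ}
    (hs : s ∈ L) (ht : t ∈ L) (hst : LinearIndependent ℝ ![s, t]) :
    ∀ c ∈ L, c ∈ Submodule.span ℝ {s, t} := by
  intro c hc
  by_contra hcs
  have hcs' : c ∉ Submodule.span ℝ (Set.range ![s, t]) := by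
    have : Set.range ![s, t] = {s, t} := by
      rw [Matrix.range_cons, Matrix.range_cons, Matrix.range_empty]
      simp [Set.pair_comm]
    rwa [this]
  have h3 : LinearIndependent ℝ ![c, s, t] := by
    rw [show (![c, s, t] : Fin 3 → Fin n → ℝ) = Fin.cons c ![s, t] from rfl,
      linearIndependent_fin_cons]
    exact ⟨hst, hcs'⟩
  set W := Submodule.span ℝ (Set.range ![c, s, t]) with hW
  set K := LinearMap.ker A.mulVecLin with hK
  have hWf : Module.finrank ℝ W = 3 := by
    rw [hW, finrank_span_eq_card h3]
    simp
  have hKf : 2 + Module.finrank ℝ K = n := by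
    have := LinearMap.finrank_range_add_finrank_ker A.mulVecLin
    rw [Module.finrank_fin_fun] at this
    rw [← hrank, Matrix.rank]
    exact this
  have hinf : W ⊓ K = ⊥ := by
    rw [Submodule.eq_bot_iff]
    rintro v ⟨hvW, hvK⟩
    have hAv : A *ᵥ v = 0 := hvK
    obtain ⟨g, hg⟩ := (Submodule.mem_span_range_iff_exists_fun ℝ).1 hvW
    have hdots : ∀ x ∈ L, x ⬝ᵥ v = 0 := rep_dot_ker hrep hAv
    have hveq : v = g 0 • c + (g 1 • s + g 2 • t) := by
      rw [← hg, Fin.sum_univ_three]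
      simp [add_assoc]
    have hvv0 : (g 0 • c + (g 1 • s + g 2 • t)) ⬝ᵥ v = 0 := by
      rw [add_dotProduct, add_dotProduct, smul_dotProduct, smul_dotProduct,
        smul_dotProduct, hdots c hc, hdots s hs, hdots t ht]
      simp
    have hvv : v ⬝ᵥ v = 0 := by nth_rewrite 1 [hveq]; exact hvv0
    exact dotProduct_self_eq_zero.1 hvv
  have hsup : Module.finrank ℝ ↥(W ⊔ K) ≤ n := by
    have := Submodule.finrank_le (W ⊔ K : Submodule ℝ (Fin n → ℝ))
    rwa [Module.finrank_fin_fun] at this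
  have := Submodule.finrank_sup_add_finrank_inf_eq W K
  rw [hinf, hWf] at this
  simp only [finrank_bot, add_zero] at this
  omega
lemma erase_coord_zero (hrank : A.rank = 2) (hrep : IsCPRep A L)
    {i j : Fin n} {s t : Fin n → ℝ} (hsL : s ∈ L) (htL : t ∈ L)
    (hst : LinearIndependent ℝ ![s, t])
    (hdichot : ∀ c ∈ L, c i = 0 ∨ c j = 0)
    (hsi : 0 < s i) (hsj : s j = 0) (hti : t i = 0) (htj : 0 < t j) :
    ∀ c ∈ L.erase s, c i = 0 := by
  classical
  intro c hcE
  have hcL : c ∈ L := Multiset.mem_of_le (Multiset.erase_le s L) hcE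
  by_contra hci
  have hcj : c j = 0 := (hdichot c hcL).resolve_left hci
  obtain ⟨α, β, hαβ⟩ := Submodule.mem_span_pair.1 (rep_span hrank hrep hsL htL hst c hcL)
  have hβ : β = 0 := by
    have h2 := congrFun hαβ j
    simp only [Pi.add_apply, Pi.smul_apply, smul_eq_mul, hsj, hcj, mul_zero, zero_add] at h2
    exact (mul_eq_zero.1 h2).resolve_right htj.ne'
  have hcα : c = α • s := by rw [← hαβ, hβ]; simp
  exact not_li_smul α hcα (li_symm (mpair_of_mem_erase (fun _ _ => li_symm) hrep.2.2.1 hsL hcE))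

lemma unique_rep (hrank : A.rank = 2) (hirr : (matGraph A).Connected)
    {i j : Fin n} (hij : i ≠ j) (hA0 : A i j = 0) (hrep : IsCPRep A L) :
    L = {fun k => A k i / Real.sqrt (A i i), fun k => A k j / Real.sqrt (A j j)} := by
  classical
  obtain ⟨hL1, hL2, hL3, hL4⟩ := hrep
  have hrep' : IsCPRep A L := ⟨hL1, hL2, hL3, hL4⟩
  have hAii : 0 < A i i := diag_pos hrep' hirr hrank i
  have hAjj : 0 < A j j := diag_pos hrep' hirr hrank j
  have hAji : A j i = 0 := by
    rw [cp_entry hL4 j i]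
    rw [show (0:ℝ) = ((L.map fun c => (0:ℝ)).sum) by simp]
    congr 1
    refine Multiset.map_congr rfl (fun c hc => ?_)
    have h0 : (L.map fun c => c i * c j).sum = 0 := by rw [← cp_entry hL4, hA0]
    have := term_eq_zero_of_sum_eq_zero
      (fun a ha => mul_nonneg (hL1 a ha i) (hL1 a ha j)) h0 hc
    rcases mul_eq_zero.1 this with h | h <;> simp [h]
  have hdichot : ∀ c ∈ L, c i = 0 ∨ c j = 0 := by
    intro c hc
    have h0 : (L.map fun c => c i * c j).sum = 0 := by rw [← cp_entry hL4, hA0]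
    exact mul_eq_zero.1 (term_eq_zero_of_sum_eq_zero
      (fun a ha => mul_nonneg (hL1 a ha i) (hL1 a ha j)) h0 hc)
  have hex_s : ∃ s ∈ L, s i ≠ 0 := by
    by_contra h
    push_neg at h
    have : A i i = 0 := by
      rw [cp_entry hL4 i i, show (0:ℝ) = ((L.map fun c => (0:ℝ)).sum) by simp]
      congr 1
      exact Multiset.map_congr rfl (fun c hc => by rw [h c hc, zero_mul])
    linarith
  have hex_t : ∃ t ∈ L, t j ≠ 0 := by
    by_contra h
    push_neg at h
    have : A j j = 0 := by
      rw [cp_entry hL4 j j, show (0:ℝ) = ((L.map fun c => (0:ℝ)).sum) by simp]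
      congr 1
      exact Multiset.map_congr rfl (fun c hc => by rw [h c hc, zero_mul])
    linarith
  obtain ⟨s, hsL, hsi0⟩ := hex_s
  obtain ⟨t, htL, htj0⟩ := hex_t
  have hsi : 0 < s i := (hL1 s hsL i).lt_of_ne (Ne.symm hsi0)
  have htj : 0 < t j := (hL1 t htL j).lt_of_ne (Ne.symm htj0)
  have hsj : s j = 0 := (hdichot s hsL).resolve_left hsi0
  have hti : t i = 0 := (hdichot t htL).resolve_right htj0
  have hts : t ≠ s := fun h => by rw [h] at hti; exact hsi.ne' hti
  have htE : t ∈ L.erase s := (Multiset.mem_erase_of_ne hts).2 htL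
  have hst : LinearIndependent ℝ ![s, t] := by
    rw [LinearIndependent.pair_iff]
    intro a b hab
    have h1 := congrFun hab i
    have h2 := congrFun hab j
    simp only [Pi.add_apply, Pi.smul_apply, smul_eq_mul, hsj, hti, mul_zero, add_zero,
      zero_add, Pi.zero_apply] at h1 h2
    exact ⟨(mul_eq_zero.1 h1).resolve_right hsi.ne',
      (mul_eq_zero.1 h2).resolve_right htj.ne'⟩
  have hts' : LinearIndependent ℝ ![t, s] := li_symm hst
  have herase_s : ∀ c ∈ L.erase s, c i = 0 :=
    erase_coord_zero hrank hrep' hsL htL hst hdichot hsi hsj hti htj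
  have herase_t : ∀ c ∈ L.erase t, c j = 0 :=
    erase_coord_zero hrank hrep' htL hsL hts'
      (fun c hc => (hdichot c hc).symm) htj hti hsj hsi
  -- value of s and t
  have hs_val : ∀ k, A k i = s k * s i := by
    intro k
    rw [cp_entry hL4 k i]
    conv_lhs => rw [← Multiset.cons_erase hsL]
    rw [Multiset.map_cons, Multiset.sum_cons]
    rw [show ((L.erase s).map fun c => c k * c i).sum = 0 from ?_, add_zero]
    rw [show (0:ℝ) = (((L.erase s).map fun c => (0:ℝ)).sum) by simp]
    congr 1
    exact Multiset.map_congr rfl (fun c hc => by rw [herase_s c hc, mul_zero])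
  have ht_val : ∀ k, A k j = t k * t j := by
    intro k
    rw [cp_entry hL4 k j]
    conv_lhs => rw [← Multiset.cons_erase htL]
    rw [Multiset.map_cons, Multiset.sum_cons]
    rw [show ((L.erase t).map fun c => c k * c j).sum = 0 from ?_, add_zero]
    rw [show (0:ℝ) = (((L.erase t).map fun c => (0:ℝ)).sum) by simp]
    congr 1
    exact Multiset.map_congr rfl (fun c hc => by rw [herase_t c hc, mul_zero])
  have hsi_sqrt : s i = Real.sqrt (A i i) := by
    rw [hs_val i, Real.sqrt_mul_self hsi.le]
  have htj_sqrt : t j = Real.sqrt (A j j) := by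
    rw [ht_val j, Real.sqrt_mul_self htj.le]
  have hs_form : s = fun k => A k i / Real.sqrt (A i i) := by
    funext k
    rw [hs_val k, hsi_sqrt, mul_div_cancel_right₀]
    rw [← hsi_sqrt]
    exact hsi.ne'
  have ht_form : t = fun k => A k j / Real.sqrt (A j j) := by
    funext k
    rw [ht_val k, htj_sqrt, mul_div_cancel_right₀]
    rw [← htj_sqrt]
    exact htj.ne'
  -- the remainder is empty
  have hLdecomp : L = s ::ₘ t ::ₘ (L.erase s).erase t := by
    rw [Multiset.cons_erase htE, Multiset.cons_erase hsL]
  have hN : (L.erase s).erase t = 0 := by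
    rw [Multiset.eq_zero_iff_forall_notMem]
    intro c hcN
    have hcEs : c ∈ L.erase s := Multiset.mem_of_le (Multiset.erase_le _ _) hcN
    have hcEt : c ∈ L.erase t := by
      rw [Multiset.erase_comm] at hcN
      exact Multiset.mem_of_le (Multiset.erase_le _ _) hcN
    have hcL : c ∈ L := Multiset.mem_of_le (Multiset.erase_le _ _) hcEs
    have hci : c i = 0 := herase_s c hcEs
    have hcj : c j = 0 := herase_t c hcEt
    obtain ⟨α, β, hαβ⟩ := Submodule.mem_span_pair.1 (rep_span hrank hrep' hsL htL hst c hcL)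
    have hα : α = 0 := by
      have h1 := congrFun hαβ i
      simp only [Pi.add_apply, Pi.smul_apply, smul_eq_mul, hti, hci, mul_zero, add_zero] at h1
      exact (mul_eq_zero.1 h1).resolve_right hsi.ne'
    have hβ : β = 0 := by
      have h2 := congrFun hαβ j
      simp only [Pi.add_apply, Pi.smul_apply, smul_eq_mul, hsj, hcj, mul_zero, zero_add] at h2
      exact (mul_eq_zero.1 h2).resolve_right htj.ne'
    have : c = 0 := by rw [← hαβ, hα, hβ]; simp
    exact hL2 c hcL this
  rw [hLdecomp, hN, hs_form, ht_form]
  rfl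
lemma rank_vecMulVec_le' (u v : Fin n → ℝ) : (vecMulVec u v).rank ≤ 1 := by
  rw [vecMulVec_eq (Fin 1)]
  exact (Matrix.rank_mul_le_left _ _).trans ((Matrix.rank_le_card_width _).trans (by simp))

lemma vecMulVec_comb (s t : Fin n → ℝ) (α β : ℝ) :
    vecMulVec (α • s + β • t) (α • s + β • t)
      = (α * α) • vecMulVec s s + (α * β) • (vecMulVec s t + vecMulVec t s)
        + (β * β) • vecMulVec t t := by
  ext k l
  simp only [vecMulVec_apply, Matrix.add_apply, Matrix.smul_apply, Pi.add_apply,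
    Pi.smul_apply, smul_eq_mul]
  ring

lemma gram_exists (s t : Fin n → ℝ) (L : Multiset (Fin n → ℝ))
    (hspan : ∀ c ∈ L, ∃ α β : ℝ, α • s + β • t = c) :
    ∃ p q r : ℝ, 0 ≤ p ∧ 0 ≤ r ∧ q ^ 2 ≤ p * r ∧
      (L.map fun c => vecMulVec c c).sum
        = p • vecMulVec s s + q • (vecMulVec s t + vecMulVec t s) + r • vecMulVec t t := by
  induction L using Multiset.induction_on with
  | empty =>
    exact ⟨0, 0, 0, le_refl _, le_refl _, by norm_num, by simp⟩
  | cons a M ih =>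
    obtain ⟨p, q, r, hp, hr, hq, hsum⟩ :=
      ih (fun c hc => hspan c (Multiset.mem_cons_of_mem hc))
    obtain ⟨α, β, hab⟩ := hspan a (Multiset.mem_cons_self _ _)
    refine ⟨p + α * α, q + α * β, r + β * β, add_nonneg hp (mul_self_nonneg α), add_nonneg hr (mul_self_nonneg β), ?_, ?_⟩
    · rcases hp.lt_or_eq with hp' | hp'
      · nlinarith [sq_nonneg (p * β - q * α), sq_nonneg α, sq_nonneg β,
          mul_nonneg (sub_nonneg.2 hq) (sq_nonneg α)]
      · have hq0 : q = 0 := by nlinarith [sq_nonneg q]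
        rw [hq0, ← hp']
        nlinarith [sq_nonneg α, sq_nonneg β, mul_nonneg hr (sq_nonneg α)]
    · rw [Multiset.map_cons, Multiset.sum_cons, hsum, ← hab, vecMulVec_comb]
      ext k l
      simp only [Matrix.add_apply, Matrix.smul_apply, vecMulVec_apply, smul_eq_mul]
      ring

lemma exists_b (hrank : A.rank = 2) (hrep : IsCPRep A L) :
    ∃ b₁ b₂ : Fin n → ℝ, LinearIndependent ℝ ![b₁, b₂] ∧
      ∀ k l, A k l = b₁ k * b₁ l + b₂ k * b₂ l := by
  classical
  obtain ⟨hL1, hL2, hL3, hL4⟩ := hrep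
  have hrep' : IsCPRep A L := ⟨hL1, hL2, hL3, hL4⟩
  have hcard : 2 ≤ Multiset.card L := card_ge_two hrank hrep'
  have hLpos : 0 < Multiset.card L := by omega
  obtain ⟨s, hsL⟩ := Multiset.card_pos_iff_exists_mem.1 hLpos
  obtain ⟨M, hM⟩ := Multiset.exists_cons_of_mem hsL
  have hMcard : 1 ≤ Multiset.card M := by
    have := hM ▸ hcard
    simp only [Multiset.card_cons] at this
    omega
  have hMpos : 0 < Multiset.card M := by omega
  obtain ⟨t, htM⟩ := Multiset.card_pos_iff_exists_mem.1 hMpos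
  have htE : t ∈ L.erase s := by
    rw [hM, Multiset.erase_cons_head]
    exact htM
  have hst : LinearIndependent ℝ ![s, t] :=
    mpair_of_mem_erase (fun _ _ => li_symm) hL3 hsL htE
  have htL : t ∈ L := Multiset.mem_of_le (Multiset.erase_le _ _) htE
  have hspan : ∀ c ∈ L, ∃ α β : ℝ, α • s + β • t = c := fun c hc =>
    Submodule.mem_span_pair.1 (rep_span hrank hrep' hsL htL hst c hc)
  obtain ⟨p, q, r, hp, hr, hq, hsum⟩ := gram_exists s t L hspan
  have hA : A = p • vecMulVec s s + q • (vecMulVec s t + vecMulVec t s) + r • vecMulVec t t := by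
    rw [← hL4, hsum]
  have hdet : 0 < p * r - q ^ 2 := by
    rcases (sub_nonneg.2 hq).lt_or_eq with h | h
    · exact h
    exfalso
    have hdet0 : p * r = q ^ 2 := by linarith
    rcases hp.lt_or_eq with hp' | hp'
    · -- p > 0 : A = vecMulVec v v, rank ≤ 1
      set sp := Real.sqrt p with hsp_def
      have hsp : sp * sp = p := Real.mul_self_sqrt hp
      have hsp0 : sp ≠ 0 := by positivity
      set v := sp • s + (q / sp) • t with hv
      have hdet0' : (sp * sp) * r = q ^ 2 := by rw [hsp, hdet0]
      have hAv : A = vecMulVec v v := by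
        rw [hA, hv]
        ext k l
        simp only [Matrix.add_apply, Matrix.smul_apply, vecMulVec_apply, Pi.add_apply,
          Pi.smul_apply, smul_eq_mul]
        rw [show p = sp * sp from hsp.symm]
        field_simp
        linear_combination (t k * t l) * hdet0'
      have h1 := rank_vecMulVec_le' v v
      rw [← hAv, hrank] at h1
      omega
    · -- p = 0 : q = 0, A = r • tt
      have hq0 : q = 0 := by nlinarith [sq_nonneg q]
      have hAr : A = vecMulVec (r • t) t := by
        rw [hA, hq0, ← hp']
        ext k l
        simp only [Matrix.add_apply, Matrix.smul_apply, vecMulVec_apply, Pi.smul_apply,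
          smul_eq_mul]
        ring
      have h1 := rank_vecMulVec_le' (r • t) t
      rw [← hAr, hrank] at h1
      omega
  have hp' : 0 < p := by
    rcases hp.lt_or_eq with h | h
    · exact h
    · exfalso; nlinarith [sq_nonneg q]
  set sp := Real.sqrt p with hsp_def
  have hsp : sp * sp = p := Real.mul_self_sqrt hp
  have hsp0 : 0 < sp := Real.sqrt_pos.2 hp'
  set d := (p * r - q ^ 2) / p with hd_def
  have hd : 0 < d := div_pos hdet hp'
  set sd := Real.sqrt d with hsd_def
  have hsd : sd * sd = d := Real.mul_self_sqrt hd.le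
  have hsd0 : 0 < sd := Real.sqrt_pos.2 hd
  refine ⟨sp • s + (q / sp) • t, sd • t, ?_, ?_⟩
  · have := li_transform hst (e := sp) (f := q / sp) (g := 0) (k := sd)
      (by simp only [mul_zero, sub_zero]; exact (mul_pos hsp0 hsd0).ne')
    simpa using this
  · intro k l
    rw [hA]
    simp only [Matrix.add_apply, Matrix.smul_apply, vecMulVec_apply, Pi.add_apply,
      Pi.smul_apply, smul_eq_mul]
    have hsd' : sd * sd * (sp * sp) = (sp * sp) * r - q ^ 2 := by
      rw [hsd, hsp, hd_def]
      field_simp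
    rw [show p = sp * sp from hsp.symm]
    field_simp
    linear_combination (-(t k * t l)) * hsd'
lemma exists_two_rep (hrank : A.rank = 2) (hirr : (matGraph A).Connected)
    (hrep : IsCPRep A L) (hpos : ∀ k l : Fin n, k ≠ l → A k l ≠ 0) :
    ∃ d₁ d₂ : Fin n → ℝ, LinearIndependent ℝ ![d₁, d₂] ∧
      (∀ k, 0 < d₁ k) ∧ (∀ k, 0 ≤ d₂ k) ∧ (∀ k l, A k l = d₁ k * d₁ l + d₂ k * d₂ l) := by
  classical
  have hApos : ∀ k l, 0 < A k l := by
    intro k l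
    rcases eq_or_ne k l with rfl | hkl
    · exact diag_pos hrep hirr hrank k
    · exact (entry_nonneg hrep k l).lt_of_ne (Ne.symm (hpos k l hkl))
  obtain ⟨b₁, b₂, hli, hb⟩ := exists_b hrank hrep
  obtain ⟨i₀⟩ := Fin.pos_iff_nonempty.1 (show 0 < n by have := two_le_n hrank; omega)
  have hne : (Finset.univ : Finset (Fin n)).Nonempty := ⟨i₀, Finset.mem_univ i₀⟩
  set f : Fin n → ℝ := fun k => (b₁ i₀ * b₂ k - b₂ i₀ * b₁ k) / A i₀ k with hf
  obtain ⟨a, -, ha⟩ := Finset.exists_max_image Finset.univ f hne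
  have hcross : ∀ k, 0 ≤ b₁ k * b₂ a - b₂ k * b₁ a := by
    intro k
    have hfa : f k ≤ f a := ha k (Finset.mem_univ k)
    have hid : (b₁ i₀ * b₂ a - b₂ i₀ * b₁ a) * A i₀ k
        - (b₁ i₀ * b₂ k - b₂ i₀ * b₁ k) * A i₀ a
        = A i₀ i₀ * (b₁ k * b₂ a - b₂ k * b₁ a) := by
      rw [hb i₀ k, hb i₀ a, hb i₀ i₀]; ring
    have e1 : f a * A i₀ a = b₁ i₀ * b₂ a - b₂ i₀ * b₁ a :=
      div_mul_cancel₀ _ (hApos i₀ a).ne'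
    have e2 : f k * A i₀ k = b₁ i₀ * b₂ k - b₂ i₀ * b₁ k :=
      div_mul_cancel₀ _ (hApos i₀ k).ne'
    have h1 : 0 ≤ (f a - f k) * (A i₀ a * A i₀ k) :=
      mul_nonneg (sub_nonneg.2 hfa) (mul_nonneg (hApos i₀ a).le (hApos i₀ k).le)
    have h2 : (f a - f k) * (A i₀ a * A i₀ k)
        = A i₀ i₀ * (b₁ k * b₂ a - b₂ k * b₁ a) := by
      rw [← hid, ← e1, ← e2]; ring
    rw [h2] at h1
    exact nonneg_of_mul_nonneg_right h1 (hApos i₀ i₀)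
  set na := Real.sqrt (A a a) with hna_def
  have hna : na * na = A a a := Real.mul_self_sqrt (hApos a a).le
  have hna0 : 0 < na := Real.sqrt_pos.2 (hApos a a)
  have hna2 : na * na = b₁ a * b₁ a + b₂ a * b₂ a := by rw [hna, hb]
  set d₁ : Fin n → ℝ := fun k => A a k / na with hd₁
  set d₂ : Fin n → ℝ := fun k => (b₁ k * b₂ a - b₂ k * b₁ a) / na with hd₂
  have hkey : ∀ k l, A k l = d₁ k * d₁ l + d₂ k * d₂ l := by
    intro k l
    rw [hd₁, hd₂]
    simp only
    rw [hb a k, hb a l, hb k l]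
    field_simp
    linear_combination (b₁ k * b₁ l + b₂ k * b₂ l) * hna2
  have hd₁pos : ∀ k, 0 < d₁ k := fun k => div_pos (hApos a k) hna0
  have hd₂nonneg : ∀ k, 0 ≤ d₂ k := fun k => div_nonneg (hcross k) hna0.le
  have hdli : LinearIndependent ℝ ![d₁, d₂] := by
    have hform : d₁ = (b₁ a / na) • b₁ + (b₂ a / na) • b₂ ∧
        d₂ = (b₂ a / na) • b₁ + (-(b₁ a) / na) • b₂ := by
      constructor <;> funext k <;>
        simp only [hd₁, hd₂, Pi.add_apply, Pi.smul_apply, smul_eq_mul]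
      · rw [hb a k]; ring
      · ring
    rw [hform.1, hform.2]
    refine li_transform hli ?_
    have : b₁ a / na * (-(b₁ a) / na) - b₂ a / na * (b₂ a / na)
        = -((b₁ a * b₁ a + b₂ a * b₂ a) / (na * na)) := by ring
    rw [this, ← hna2]
    have hnn : na * na ≠ 0 := by positivity
    rw [div_self hnn]
    norm_num
  exact ⟨d₁, d₂, hdli, hd₁pos, hd₂nonneg, hkey⟩
/-- A two-element multiset of nonnegative, linearly independent vectors whose outer
products sum to `A` is a CP representation. -/
lemma two_rep_isCPRep {d₁ d₂ : Fin n → ℝ} (hli : LinearIndependent ℝ ![d₁, d₂])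
    (h1 : ∀ k, 0 ≤ d₁ k) (h2 : ∀ k, 0 ≤ d₂ k)
    (hk : ∀ k l, A k l = d₁ k * d₁ l + d₂ k * d₂ l) :
    IsCPRep A {d₁, d₂} := by
  refine ⟨?_, ?_, ?_, ?_⟩
  · intro b hbmem k
    rcases Multiset.mem_cons.1 hbmem with rfl | hb'
    · exact h1 k
    · rw [Multiset.mem_singleton.1 hb']
      exact h2 k
  · intro b hbmem
    rcases Multiset.mem_cons.1 hbmem with rfl | hb'
    · exact li_left_ne_zero hli
    · rw [Multiset.mem_singleton.1 hb']
      exact li_left_ne_zero (li_symm hli)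
  · exact ⟨[d₁, d₂], rfl, by
      simp only [List.pairwise_cons, List.mem_singleton, List.not_mem_nil, IsEmpty.forall_iff,
        forall_const, List.Pairwise.nil, and_true]
      intro c hc
      rw [hc]
      exact hli⟩
  · have : ({d₁, d₂} : Multiset (Fin n → ℝ)).map (fun b => vecMulVec b b)
        = {vecMulVec d₁ d₁, vecMulVec d₂ d₂} := by simp
    rw [this]
    ext k l
    simp only [Multiset.insert_eq_cons, Multiset.sum_cons, Multiset.sum_singleton,
      Matrix.add_apply, vecMulVec_apply]
    exact (hk k l).symm

lemma cprank_two (hrank : A.rank = 2) {L' : Multiset (Fin n → ℝ)}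
    (h1 : IsCPRep A L') (h2 : Multiset.card L' = 2) : cpRank A = 2 := by
  apply le_antisymm
  · exact Nat.sInf_le (show 2 ∈ {k | ∃ L, IsCPRep A L ∧ Multiset.card L = k} from ⟨L', h1, h2⟩)
  · refine le_csInf ⟨2, ⟨L', h1, h2⟩⟩ ?_
    rintro k ⟨L'', hL'', rfl⟩
    exact card_ge_two hrank hL''

lemma coord_unique {d₁ d₂ : Fin n → ℝ} (hli : LinearIndependent ℝ ![d₁, d₂])
    {α β α' β' : ℝ} (h : α • d₁ + β • d₂ = α' • d₁ + β' • d₂) : α = α' ∧ β = β' := by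
  rw [LinearIndependent.pair_iff] at hli
  have h0 : (α - α') • d₁ + (β - β') • d₂ = 0 := by
    rw [sub_smul, sub_smul]
    rw [show α • d₁ - α' • d₁ + (β • d₂ - β' • d₂)
      = (α • d₁ + β • d₂) - (α' • d₁ + β' • d₂) by abel, h]
    simp
  have := hli _ _ h0
  constructor <;> linarith [this.1, this.2]

lemma inf_reps (hrank : A.rank = 2) {d₁ d₂ : Fin n → ℝ}
    (hli : LinearIndependent ℝ ![d₁, d₂])
    (hd1 : ∀ k, 0 < d₁ k) (hd2 : ∀ k, 0 ≤ d₂ k)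
    (hk : ∀ k l, A k l = d₁ k * d₁ l + d₂ k * d₂ l) :
    ∃ e : ℝ → (Fin n → ℝ) × (Fin n → ℝ), ∃ ε : ℝ, 0 < ε ∧ ε ≤ 1/2 ∧
      (∀ m ∈ Set.Ioo (0:ℝ) ε, IsCPRep A {(e m).1, (e m).2}) ∧
      (Set.InjOn (fun m => ({(e m).1, (e m).2} : Multiset (Fin n → ℝ))) (Set.Ioo 0 ε)) := by
  classical
  obtain ⟨i₀⟩ := Fin.pos_iff_nonempty.1 (show 0 < n by have := two_le_n hrank; omega)
  have hne : (Finset.univ : Finset (Fin n)).Nonempty := ⟨i₀, Finset.mem_univ i₀⟩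
  obtain ⟨kc, -, hkc⟩ := Finset.exists_min_image Finset.univ d₁ hne
  obtain ⟨kC, -, hkC⟩ := Finset.exists_max_image Finset.univ d₂ hne
  set c := d₁ kc with hc_def
  set C := d₂ kC with hC_def
  have hc : 0 < c := hd1 kc
  have hC : 0 ≤ C := hd2 kC
  set ε : ℝ := min (1/2) (c / (4 * C + 2)) with hε_def
  have hε : 0 < ε := lt_min (by norm_num) (div_pos hc (by linarith))
  set e : ℝ → (Fin n → ℝ) × (Fin n → ℝ) := fun m =>
    (((1 - m^2)/(1 + m^2)) • d₁ + (-(2*m)/(1 + m^2)) • d₂,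
     ((2*m)/(1 + m^2)) • d₁ + ((1 - m^2)/(1 + m^2)) • d₂) with he
  have hm2 : ∀ m : ℝ, (0:ℝ) < 1 + m^2 := fun m => by positivity
  have hsum : ∀ m : ℝ, ∀ k l, A k l = (e m).1 k * (e m).1 l + (e m).2 k * (e m).2 l := by
    intro m k l
    simp only [he, Pi.add_apply, Pi.smul_apply, smul_eq_mul]
    rw [hk k l]
    have := (hm2 m).ne'
    field_simp
    ring
  have hli' : ∀ m : ℝ, m < 1 → 0 < m → LinearIndependent ℝ ![(e m).1, (e m).2] := by
    intro m hm1 hm0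
    refine li_transform hli ?_
    have h1 : (1 - m^2)/(1 + m^2) * ((1 - m^2)/(1 + m^2))
        - -(2*m)/(1 + m^2) * ((2*m)/(1 + m^2)) = 1 := by
      have := (hm2 m).ne'
      field_simp
      ring
    rw [h1]
    norm_num
  have hmem : ∀ m ∈ Set.Ioo (0:ℝ) ε, IsCPRep A {(e m).1, (e m).2} := by
    rintro m ⟨hm0, hmε⟩
    have hm1 : m < 1 := lt_of_lt_of_le hmε ((min_le_left _ _).trans (by norm_num))
    have hmc : m ≤ c / (4 * C + 2) := (le_of_lt hmε).trans (min_le_right _ _)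
    refine two_rep_isCPRep (hli' m hm1 hm0) ?_ ?_ (hsum m)
    · intro k
      simp only [he, Pi.add_apply, Pi.smul_apply, smul_eq_mul]
      have hd₁k : c ≤ d₁ k := hkc k (Finset.mem_univ k)
      have hd₂k : d₂ k ≤ C := hkC k (Finset.mem_univ k)
      have hm12 : m < 1/2 := lt_of_lt_of_le hmε (min_le_left _ _)
      have hmc' : m * (4*C + 2) ≤ c := by
        rw [← le_div_iff₀ (by linarith : (0:ℝ) < 4*C + 2)]
        exact hmc
      have hA1 : m^2 ≤ 1/4 := by nlinarith
      have h34 : (3:ℝ)/4 ≤ 1 - m^2 := by linarith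
      have hA2 : 2*m*d₂ k ≤ 2*m*C := mul_le_mul_of_nonneg_left hd₂k (by linarith)
      have hA3 : 2*m*C ≤ c/2 := by nlinarith
      have hA4 : (3/4)*c ≤ (1 - m^2) * d₁ k :=
        mul_le_mul h34 hd₁k hc.le (by linarith)
      have hnum : 0 ≤ (1 - m^2) * d₁ k - 2*m*d₂ k := by linarith
      rw [show (1 - m^2)/(1 + m^2) * d₁ k + -(2*m)/(1 + m^2) * d₂ k
        = ((1 - m^2) * d₁ k - 2*m*d₂ k)/(1 + m^2) from by ring]
      exact div_nonneg hnum (hm2 m).le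
    · intro k
      simp only [he, Pi.add_apply, Pi.smul_apply, smul_eq_mul]
      have := hm2 m
      have h1 : 0 ≤ (2*m)/(1 + m^2) := by positivity
      have h2 : 0 ≤ (1 - m^2)/(1 + m^2) := by
        apply div_nonneg _ (hm2 m).le
        nlinarith
      exact add_nonneg (mul_nonneg h1 (hd1 k).le) (mul_nonneg h2 (hd2 k))
  refine ⟨e, ε, hε, min_le_left _ _, hmem, ?_⟩
  rintro m ⟨hm0, hmε⟩ m' ⟨hm0', hmε'⟩ heq
  have hm1 : m < 1 := lt_of_lt_of_le hmε ((min_le_left _ _).trans (by norm_num))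
  have hm1' : m' < 1 := lt_of_lt_of_le hmε' ((min_le_left _ _).trans (by norm_num))
  simp only [Multiset.insert_eq_cons] at heq
  rcases Multiset.cons_eq_cons.1 heq with ⟨h1, -⟩ | ⟨-, cs, h1, h2⟩
  · -- e m .1 = e m' .1
    obtain ⟨-, hβ⟩ := coord_unique hli (show ((1 - m^2)/(1 + m^2)) • d₁
      + (-(2*m)/(1 + m^2)) • d₂ = ((1 - m'^2)/(1 + m'^2)) • d₁
      + (-(2*m')/(1 + m'^2)) • d₂ from h1)
    -- hβ : -(2m)/(1+m²) = -(2m')/(1+m'²)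
    have h3 : m * (1 + m'^2) = m' * (1 + m^2) := by
      have e1 := (hm2 m).ne'
      have e2 := (hm2 m').ne'
      field_simp at hβ
      linarith
    have h4 : (m - m') * (1 - m * m') = 0 := by linear_combination h3
    have h5 : 0 < 1 - m * m' := by nlinarith
    have := mul_eq_zero.1 h4
    rcases this with h | h
    · linarith
    · linarith
  · -- swapped case: impossible
    exfalso
    have h1' : (e m).2 = (e m').1 := by
      have hcard := congrArg Multiset.card h1
      simp only [Multiset.card_singleton, Multiset.card_cons] at hcard
      have hcs : cs = 0 := Multiset.card_eq_zero.1 (by omega)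
      rw [hcs] at h1
      simpa using h1
    obtain ⟨hα, hβ⟩ := coord_unique hli (show ((2*m)/(1 + m^2)) • d₁
      + ((1 - m^2)/(1 + m^2)) • d₂ = ((1 - m'^2)/(1 + m'^2)) • d₁
      + (-(2*m')/(1 + m'^2)) • d₂ from h1')
    have hL : 0 < (1 - m^2)/(1 + m^2) := div_pos (by nlinarith) (hm2 m)
    have hR : -(2*m')/(1 + m'^2) < 0 := div_neg_of_neg_of_pos (by linarith) (hm2 m')
    linarith [hβ ▸ hL]
/-- An irreducible rank-2 completely positive matrix has a unique CP representation iff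
it has a zero off-diagonal entry in a nonzero row and column; if it has no such zero
entry, it has infinitely many minimal CP representations. -/
theorem stmt_4 (n : ℕ) (A : Matrix (Fin n) (Fin n) ℝ) (hCP : IsCP A)
    (hirr : (matGraph A).Connected) (hrank : A.rank = 2) :
    ((∃! L, IsCPRep A L) ↔
      ∃ i j, i ≠ j ∧ A i j = 0 ∧ (∃ l, A i l ≠ 0) ∧ (∃ l, A l j ≠ 0)) ∧
    ((¬ ∃ i j, i ≠ j ∧ A i j = 0 ∧ (∃ l, A i l ≠ 0) ∧ (∃ l, A l j ≠ 0)) →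
      {L | IsMinCPRep A L}.Infinite) := by
  classical
  obtain ⟨L₀, hL₀⟩ := hCP
  have hdiag : ∀ i, 0 < A i i := fun i => diag_pos hL₀ hirr hrank i
  have hposcase : (¬ ∃ i j, i ≠ j ∧ A i j = 0 ∧ (∃ l, A i l ≠ 0) ∧ (∃ l, A l j ≠ 0)) →
      {L | IsMinCPRep A L}.Infinite := by
    intro hno
    have hpos : ∀ k l : Fin n, k ≠ l → A k l ≠ 0 := by
      intro k l hkl hA0
      exact hno ⟨k, l, hkl, hA0, ⟨k, (hdiag k).ne'⟩, ⟨l, (hdiag l).ne'⟩⟩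
    obtain ⟨d₁, d₂, hli, hd1, hd2, hkey⟩ := exists_two_rep hrank hirr hL₀ hpos
    obtain ⟨e, ε, hε, hε12, hmem, hinj⟩ := inf_reps hrank hli hd1 hd2 hkey
    have hrank2 : cpRank A = 2 := by
      have hm : (ε/2) ∈ Set.Ioo (0:ℝ) ε := ⟨by linarith, by linarith⟩
      exact cprank_two hrank (hmem _ hm) (by simp)
    have hIoo : (Set.Ioo (0:ℝ) ε).Infinite := Set.Ioo_infinite hε
    refine Set.infinite_of_injOn_mapsTo hinj ?_ hIoo
    intro m hm
    refine ⟨hmem m hm, ?_⟩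
    rw [hrank2]
    simp
  refine ⟨⟨?_, ?_⟩, hposcase⟩
  · intro huniq
    by_contra hno
    obtain ⟨L₁, hL₁, L₂, hL₂, hne⟩ := (hposcase hno).nontrivial
    exact hne (huniq.unique hL₁.1 hL₂.1)
  · rintro ⟨i, j, hij, hA0, -, -⟩
    exact ⟨L₀, hL₀, fun L' hL' =>
      (unique_rep hrank hirr hij hA0 hL').trans (unique_rep hrank hirr hij hA0 hL₀).symm⟩
end

section
/- Let A be an n×n irreducible completely positive matrix, n ≥ 2, whose graph is triangle free, and suppose the comparison matrix M(A) is singular. Then A has a unique CP factorization, and the number of rank-one summands in it equals the number of edges of G(A). -/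
open Matrix

lemma msum_apply {n : ℕ} (L : Multiset (Fin n → ℝ)) (i j : Fin n) :
    ((L.map fun b => vecMulVec b b).sum) i j = (L.map fun b => b i * b j).sum := by
  induction L using Multiset.induction with
  | empty => simp
  | cons a s ih => simp [Matrix.add_apply, ih, vecMulVec_apply]

lemma fsum_msum {ι α : Type*} (s : Finset ι) (L : Multiset α) (f : ι → α → ℝ) :
    ∑ i ∈ s, (L.map (f i)).sum = (L.map fun b => ∑ i ∈ s, f i b).sum := by
  induction L using Multiset.induction with
  | empty => simp
  | cons a t ih => simp [Finset.sum_add_distrib, ih]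

lemma msum_zero_of_nonneg {α : Type*} {L : Multiset α} {f : α → ℝ}
    (h0 : ∀ b ∈ L, 0 ≤ f b) (hs : (L.map f).sum = 0) : ∀ b ∈ L, f b = 0 := by
  induction L using Multiset.induction with
  | empty => simp
  | cons a t ih =>
    simp only [Multiset.map_cons, Multiset.sum_cons] at hs
    have ha : 0 ≤ f a := h0 a (Multiset.mem_cons_self a t)
    have ht : 0 ≤ (t.map f).sum :=
      Multiset.sum_nonneg (fun y hy => by
        obtain ⟨b, hb, rfl⟩ := Multiset.mem_map.1 hy
        exact h0 b (Multiset.mem_cons_of_mem hb))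
    have hfa : f a = 0 := by linarith
    intro b hb
    rcases Multiset.mem_cons.1 hb with rfl | hb
    · exact hfa
    · exact ih (fun c hc => h0 c (Multiset.mem_cons_of_mem hc)) (by linarith) b hb

lemma mem_exists_ne_of_sum_ne {α : Type*} {L : Multiset α} {f : α → ℝ}
    (hs : (L.map f).sum ≠ 0) : ∃ b ∈ L, f b ≠ 0 := by
  by_contra h
  push_neg at h
  exact hs (Multiset.sum_eq_zero (fun y hy => by
    obtain ⟨b, hb, rfl⟩ := Multiset.mem_map.1 hy; exact h b hb))

lemma msum_sub {α : Type*} (L : Multiset α) (f g : α → ℝ) :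
    (L.map f).sum - (L.map g).sum = (L.map fun b => f b - g b).sum := by
  induction L using Multiset.induction with
  | empty => simp
  | cons a t ih => simp only [Multiset.map_cons, Multiset.sum_cons, ← ih]; ring

noncomputable def can {n : ℕ} (A : Matrix (Fin n) (Fin n) ℝ) (x : Fin n → ℝ) (i j : Fin n) :
    Fin n → ℝ := fun k =>
  if k = i then Real.sqrt ((A i j + A j i) / 2 * x j / x i)
  else if k = j then Real.sqrt ((A i j + A j i) / 2 * x i / x j) else 0

lemma can_symm {n : ℕ} (A : Matrix (Fin n) (Fin n) ℝ) (x : Fin n → ℝ) (i j : Fin n) :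
    can A x i j = can A x j i := by
  funext k
  unfold can
  by_cases hij : i = j
  · subst hij; rfl
  · by_cases hki : k = i
    · subst hki; simp [hij, add_comm (A k j) (A j k)]
    · by_cases hkj : k = j
      · subst hkj; simp [Ne.symm hij, hki, add_comm (A i k) (A k i)]
      · simp [hki, hkj]

noncomputable def canon {n : ℕ} (A : Matrix (Fin n) (Fin n) ℝ) (x : Fin n → ℝ) :
    Sym2 (Fin n) → (Fin n → ℝ) :=
  Sym2.lift ⟨fun i j => can A x i j, fun i j => can_symm A x i j⟩

lemma canon_mk {n : ℕ} (A : Matrix (Fin n) (Fin n) ℝ) (x : Fin n → ℝ) (i j : Fin n) :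
    canon A x s(i, j) = can A x i j := rfl

lemma quad_eq {n : ℕ} (A : Matrix (Fin n) (Fin n) ℝ) (L : Multiset (Fin n → ℝ)) (x : Fin n → ℝ)
    (hA : ∀ i j, A i j = (L.map fun b => b i * b j).sum) (hAnn : ∀ i j, 0 ≤ A i j) :
    x ⬝ᵥ (compMatrix A *ᵥ x)
      = (L.map fun b => 2 * (∑ k, (b k * x k) ^ 2) - (∑ k, b k * x k) ^ 2).sum := by
  have habs : ∀ i j : Fin n, |A i j| = A i j := fun i j => abs_of_nonneg (hAnn i j)
  have h1 : x ⬝ᵥ (compMatrix A *ᵥ x)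
      = ∑ i, (2 * A i i * x i ^ 2) - ∑ i, ∑ j, A i j * (x i * x j) := by
    simp only [dotProduct, mulVec, dotProduct, compMatrix, habs]
    rw [← Finset.sum_sub_distrib]
    refine Finset.sum_congr rfl fun i _ => ?_
    have : ∀ j : Fin n, x i * ((if i = j then A i j else -A i j) * x j)
        = 2 * (if j = i then A i i * x i * x i else 0) - A i j * (x i * x j) := by
      intro j
      by_cases h : i = j
      · subst h; simp; ring
      · simp [h, Ne.symm h]; ring
    rw [Finset.mul_sum, Finset.sum_congr rfl fun j _ => this j, Finset.sum_sub_distrib,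
      ← Finset.mul_sum]
    simp
    ring
  rw [h1]
  have h2 : ∑ i, (2 * A i i * x i ^ 2)
      = (L.map fun b => 2 * ∑ k, (b k * x k) ^ 2).sum := by
    simp only [hA]
    have : ∀ i : Fin n, 2 * (L.map fun b => b i * b i).sum * x i ^ 2
        = (L.map fun b => 2 * (b i * x i) ^ 2).sum := by
      intro i
      rw [show (L.map fun b => 2 * (b i * x i) ^ 2)
          = (L.map fun b => (b i * b i) * (2 * x i ^ 2)) by
        refine Multiset.map_congr rfl fun b _ => by ring]
      rw [Multiset.sum_map_mul_right]; ring
    rw [Finset.sum_congr rfl fun i _ => this i, fsum_msum]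
    refine congrArg _ (Multiset.map_congr rfl fun b _ => ?_)
    rw [Finset.mul_sum]
  have h3 : ∑ i, ∑ j, A i j * (x i * x j)
      = (L.map fun b => (∑ k, b k * x k) ^ 2).sum := by
    simp only [hA]
    have : ∀ i j : Fin n, (L.map fun b => b i * b j).sum * (x i * x j)
        = (L.map fun b => (b i * x i) * (b j * x j)).sum := by
      intro i j
      rw [show (L.map fun b => (b i * x i) * (b j * x j))
          = (L.map fun b => (b i * b j) * (x i * x j)) by
        refine Multiset.map_congr rfl fun b _ => by ring]
      rw [Multiset.sum_map_mul_right]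
    simp only [this]
    rw [Finset.sum_congr rfl fun i _ => fsum_msum Finset.univ L _, fsum_msum]
    refine congrArg _ (Multiset.map_congr rfl fun b _ => ?_)
    rw [sq, Finset.sum_mul_sum]
  rw [h2, h3, msum_sub]

/-! ### The key lemma -/

lemma key {n : ℕ} (A : Matrix (Fin n) (Fin n) ℝ)
    (hirr : (matGraph A).Connected) (htf : (matGraph A).CliqueFree 3)
    (x : Fin n → ℝ) (hx : x ≠ 0) (hker : compMatrix A *ᵥ x = 0)
    (L : Multiset (Fin n → ℝ)) (hL : IsCPRep A L) :
    L = ((Set.toFinite (matGraph A).edgeSet).toFinset.val.map (canon A x)) := by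
  classical
  obtain ⟨hnn, hnz, hpw, hsum⟩ := hL
  have hA : ∀ i j, A i j = (L.map fun b => b i * b j).sum := fun i j => by
    rw [← hsum]; exact msum_apply L i j
  have hAnn : ∀ i j, 0 ≤ A i j := by
    intro i j
    rw [hA]
    refine Multiset.sum_nonneg (fun y hy => ?_)
    obtain ⟨b, hb, rfl⟩ := Multiset.mem_map.1 hy
    exact mul_nonneg (hnn b hb i) (hnn b hb j)
  have hAsymm : ∀ i j, A i j = A j i := by
    intro i j
    rw [hA, hA]
    exact congrArg _ (Multiset.map_congr rfl fun b _ => mul_comm _ _)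
  have hApos : ∀ i j, ∀ b ∈ L, b i ≠ 0 → b j ≠ 0 → 0 < A i j := by
    intro i j b hb hi hj
    have h1 : 0 < b i * b j :=
      mul_pos ((hnn b hb i).lt_of_ne (Ne.symm hi)) ((hnn b hb j).lt_of_ne (Ne.symm hj))
    have h2 : b i * b j ≤ A i j := by
      rw [hA]
      refine Multiset.single_le_sum (fun y hy => ?_) _ ?_
      · obtain ⟨c, hc, rfl⟩ := Multiset.mem_map.1 hy
        exact mul_nonneg (hnn c hc i) (hnn c hc j)
      · exact Multiset.mem_map.2 ⟨b, hb, rfl⟩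
    linarith
  have hadj : ∀ i j, i ≠ j → ∀ b ∈ L, b i ≠ 0 → b j ≠ 0 → (matGraph A).Adj i j := by
    intro i j hij b hb hi hj
    exact ⟨hij, Or.inl (hApos i j b hb hi hj).ne'⟩
  have supp2 : ∀ b ∈ L, ∀ i j k, b i ≠ 0 → b j ≠ 0 → b k ≠ 0 → i = j ∨ i = k ∨ j = k := by
    intro b hb i j k hi hj hk
    by_contra h
    push_neg at h
    obtain ⟨hij, hik, hjk⟩ := h
    exact htf {i, j, k} (SimpleGraph.is3Clique_triple_iff.mpr
      ⟨hadj i j hij b hb hi hj, hadj i k hik b hb hi hk, hadj j k hjk b hb hj hk⟩)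
  set q : (Fin n → ℝ) → ℝ :=
    fun b => 2 * (∑ k, (b k * x k) ^ 2) - (∑ k, b k * x k) ^ 2 with hqdef
  have hq0 : (L.map q).sum = 0 := by
    rw [← quad_eq A L x hA hAnn, hker, dotProduct_zero]
  have qform : ∀ b ∈ L,
      (∃ i, b i ≠ 0 ∧ (∀ k, b k ≠ 0 → k = i) ∧ q b = (b i * x i) ^ 2) ∨
      (∃ i j, i ≠ j ∧ b i ≠ 0 ∧ b j ≠ 0 ∧ (∀ k, b k ≠ 0 → k = i ∨ k = j) ∧
        q b = (b i * x i - b j * x j) ^ 2) := by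
    intro b hb
    obtain ⟨i, hi⟩ : ∃ i, b i ≠ 0 := by
      by_contra h
      push_neg at h
      exact hnz b hb (funext h)
    by_cases h2 : ∃ j, j ≠ i ∧ b j ≠ 0
    · obtain ⟨j, hji, hj⟩ := h2
      right
      have hij : i ≠ j := Ne.symm hji
      have hsupp : ∀ k, b k ≠ 0 → k = i ∨ k = j := by
        intro k hk
        rcases supp2 b hb i j k hi hj hk with h | h | h
        · exact absurd h hij
        · exact Or.inl h.symm
        · exact Or.inr h.symm
      have hvan : ∀ k, k ∉ ({i, j} : Finset (Fin n)) → b k = 0 := by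
        intro k hk
        by_contra h
        rcases hsupp k h with rfl | rfl <;> simp at hk
      have e1 : ∑ k, (b k * x k) ^ 2 = (b i * x i) ^ 2 + (b j * x j) ^ 2 := by
        rw [← Finset.sum_subset (Finset.subset_univ ({i, j} : Finset (Fin n)))
          (fun k _ hk => by rw [hvan k hk]; ring)]
        rw [Finset.sum_pair hij]
      have e2 : ∑ k, b k * x k = b i * x i + b j * x j := by
        rw [← Finset.sum_subset (Finset.subset_univ ({i, j} : Finset (Fin n)))
          (fun k _ hk => by rw [hvan k hk]; ring)]
        rw [Finset.sum_pair hij]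
      refine ⟨i, j, hij, hi, hj, hsupp, ?_⟩
      rw [hqdef]
      simp only []
      rw [e1, e2]
      ring
    · push_neg at h2
      left
      have hsupp : ∀ k, b k ≠ 0 → k = i := by
        intro k hk
        by_contra h
        exact hk (h2 k h)
      refine ⟨i, hi, hsupp, ?_⟩
      have e1 : ∑ k, (b k * x k) ^ 2 = (b i * x i) ^ 2 := by
        refine Finset.sum_eq_single i (fun k _ hk => ?_) (fun h => absurd (Finset.mem_univ i) h)
        rw [h2 k hk]; ring
      have e2 : ∑ k, b k * x k = b i * x i := by
        refine Finset.sum_eq_single i (fun k _ hk => ?_) (fun h => absurd (Finset.mem_univ i) h)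
        rw [h2 k hk]; ring
      rw [hqdef]
      simp only []
      rw [e1, e2]
      ring
  have hqz : ∀ b ∈ L, q b = 0 := by
    refine msum_zero_of_nonneg (fun b hb => ?_) hq0
    rcases qform b hb with ⟨i, _, _, hq⟩ | ⟨i, j, _, _, _, _, hq⟩ <;>
      rw [hq] <;> positivity
  -- standardized support/relation facts
  have hrel2 : ∀ b ∈ L, ∀ i j, i ≠ j → b i ≠ 0 → b j ≠ 0 →
      (∀ k, b k ≠ 0 → k = i ∨ k = j) ∧ b i * x i = b j * x j := by
    intro b hb i j hij hbi hbj
    rcases qform b hb with ⟨i0, _, hs, _⟩ | ⟨i0, j0, hij0, _, _, hs, hq⟩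
    · exact absurd ((hs i hbi).trans (hs j hbj).symm) hij
    · have hq0' : (b i0 * x i0 - b j0 * x j0) ^ 2 = 0 := by rw [← hq]; exact hqz b hb
      have hrel0 : b i0 * x i0 = b j0 * x j0 := by
        have := pow_eq_zero_iff (n := 2) (by norm_num) |>.1 hq0'
        linarith [sub_eq_zero.1 this]
      rcases hs i hbi with rfl | rfl <;> rcases hs j hbj with rfl | rfl
      · exact absurd rfl hij
      · exact ⟨fun k hk => (hs k hk).imp id id, hrel0⟩
      · exact ⟨fun k hk => ((hs k hk).imp id id).symm, hrel0.symm⟩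
      · exact absurd rfl hij
  have hstep : ∀ i j, (matGraph A).Adj i j → x i ≠ 0 → x j ≠ 0 := by
    rintro i j ⟨hij, hAij⟩ hxi
    have hAij' : A i j ≠ 0 := by
      rcases hAij with h | h
      · exact h
      · rw [hAsymm]; exact h
    obtain ⟨b, hb, hbij⟩ : ∃ b ∈ L, b i * b j ≠ 0 :=
      mem_exists_ne_of_sum_ne (by rw [← hA]; exact hAij')
    have hbi : b i ≠ 0 := left_ne_zero_of_mul hbij
    have hbj : b j ≠ 0 := right_ne_zero_of_mul hbij
    obtain ⟨_, hrel⟩ := hrel2 b hb i j hij hbi hbj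
    intro hxj
    rw [hxj, mul_zero] at hrel
    exact hbi (by
      have := mul_eq_zero.1 hrel
      rcases this with h | h
      · exact h
      · exact absurd h hxi)
  have hxall : ∀ i, x i ≠ 0 := by
    obtain ⟨i0, h0⟩ := Function.ne_iff.mp hx
    have hwalk : ∀ {u v : Fin n}, (matGraph A).Walk u v → x u ≠ 0 → x v ≠ 0 := by
      intro u v w
      induction w with
      | nil => exact id
      | cons h p ih => exact fun hu => ih (hstep _ _ h hu)
    intro i
    obtain ⟨w⟩ := hirr.preconnected i0 i
    exact hwalk w h0
  have hpairb : ∀ b ∈ L, ∃ i j, i ≠ j ∧ b i ≠ 0 ∧ b j ≠ 0 := by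
    intro b hb
    rcases qform b hb with ⟨i, hi, _, hq⟩ | ⟨i, j, hij, hi, hj, _, _⟩
    · exfalso
      have h0 := hqz b hb
      rw [hq] at h0
      have := pow_eq_zero_iff (n := 2) (by norm_num) |>.1 h0
      rcases mul_eq_zero.1 this with h | h
      · exact hi h
      · exact hxall i h
    · exact ⟨i, j, hij, hi, hj⟩
  have hnodup : L.Nodup := by
    obtain ⟨l, hl, hlp⟩ := hpw
    rw [hl, Multiset.coe_nodup]
    exact hlp.imp (fun {a b} h => by
      rintro rfl
      rw [linearIndependent_fin2] at h
      exact h.2 1 (by simp))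
  have hLI : ∀ b ∈ L, ∀ c ∈ L, b ≠ c → LinearIndependent ℝ ![b, c] := by
    have hsymm : Std.Symm (fun b c : Fin n → ℝ => LinearIndependent ℝ ![b, c]) := by
      refine ⟨?_⟩
      intro a b h
      have heq : ![b, a] = ![a, b] ∘ (Equiv.swap (0 : Fin 2) 1) := by
        funext k
        fin_cases k <;> simp [Equiv.swap_apply_left, Equiv.swap_apply_right]
      rw [heq]
      exact h.comp _ (Equiv.injective _)
    exact Multiset.Pairwise.forall hpw
  have hdep : ∀ b ∈ L, ∀ c ∈ L, ∀ t : ℝ, t ≠ 0 → c = t • b → b = c := by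
    intro b hb c hc t ht hct
    by_contra hbc
    have h := hLI b hb c hc hbc
    rw [linearIndependent_fin2] at h
    apply h.2 t⁻¹
    show t⁻¹ • (![b, c] 1) = ![b, c] 0
    have h1 : (![b, c] 1) = c := rfl
    have h0 : (![b, c] 0) = b := rfl
    rw [h1, h0, hct, smul_smul, inv_mul_cancel₀ ht, one_smul]
  have honly : ∀ b ∈ L, ∀ i j, i ≠ j → b i ≠ 0 → b j ≠ 0 → A i j = b i * b j := by
    intro b hb i j hij hbi hbj
    obtain ⟨hsuppb, hrelb⟩ := hrel2 b hb i j hij hbi hbj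
    have hL' : L = b ::ₘ L.erase b := (Multiset.cons_erase hb).symm
    have hsplit : A i j = b i * b j + ((L.erase b).map fun c => c i * c j).sum := by
      rw [hA, hL']
      simp
    have hz : ∀ c ∈ L.erase b, c i * c j = 0 := by
      intro c hc
      by_contra hcc
      have hci : c i ≠ 0 := left_ne_zero_of_mul hcc
      have hcj : c j ≠ 0 := right_ne_zero_of_mul hcc
      have hcL : c ∈ L := Multiset.mem_of_mem_erase hc
      have hcb : c ≠ b := ((Multiset.Nodup.mem_erase_iff hnodup).1 hc).1
      obtain ⟨hsuppc, hrelc⟩ := hrel2 c hcL i j hij hci hcj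
      have hceq : c = (c i / b i) • b := by
        funext k
        by_cases hki : k = i
        · subst hki
          simp only [Pi.smul_apply, smul_eq_mul]
          field_simp
        · by_cases hkj : k = j
          · subst hkj
            simp only [Pi.smul_apply, smul_eq_mul]
            rw [div_mul_eq_mul_div, eq_div_iff hbi]
            have hxk := hxall k
            apply mul_right_cancel₀ hxk
            linear_combination c i * hrelb - b i * hrelc
          · have hbk : b k = 0 := by
              by_contra h
              rcases hsuppb k h with rfl | rfl
              · exact hki rfl
              · exact hkj rfl
            have hck : c k = 0 := by
              by_contra h
              rcases hsuppc k h with rfl | rfl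
              · exact hki rfl
              · exact hkj rfl
            simp [hbk, hck]
      exact hcb (hdep b hb c hcL _ (div_ne_zero hci hbi) hceq).symm
    have : ((L.erase b).map fun c => c i * c j).sum = 0 :=
      Multiset.sum_eq_zero (fun y hy => by
        obtain ⟨c, hc, rfl⟩ := Multiset.mem_map.1 hy
        exact hz c hc)
    rw [hsplit, this, add_zero]
  have hbcanon : ∀ b ∈ L, ∀ i j, i ≠ j → b i ≠ 0 → b j ≠ 0 → b = canon A x s(i, j) := by
    intro b hb i j hij hbi hbj
    obtain ⟨hsuppb, hrelb⟩ := hrel2 b hb i j hij hbi hbj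
    have hAij : A i j = b i * b j := honly b hb i j hij hbi hbj
    have hAji : A j i = b i * b j := by rw [← hAsymm]; exact hAij
    have hxi := hxall i
    have hxj := hxall j
    have hbip : 0 < b i := (hnn b hb i).lt_of_ne (Ne.symm hbi)
    have hbjp : 0 < b j := (hnn b hb j).lt_of_ne (Ne.symm hbj)
    funext k
    rw [canon_mk]
    unfold can
    by_cases hki : k = i
    · subst hki
      rw [if_pos rfl]
      have harg : (A k j + A j k) / 2 * x j / x k = (b k) ^ 2 := by
        rw [hAij, hAji]
        have hxj' : x j = b k * x k / b j := by
          field_simp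
          linear_combination - hrelb
        rw [hxj']
        field_simp
        ring
      rw [harg, Real.sqrt_sq hbip.le]
    · by_cases hkj : k = j
      · subst hkj
        rw [if_neg hki, if_pos rfl]
        have harg : (A i k + A k i) / 2 * x i / x k = (b k) ^ 2 := by
          rw [hAij, hAji]
          have hxi' : x i = b k * x k / b i := by
            field_simp
            linear_combination hrelb
          rw [hxi']
          field_simp
          ring
        rw [harg, Real.sqrt_sq hbjp.le]
      · rw [if_neg hki, if_neg hkj]
        by_contra h
        rcases hsuppb k h with rfl | rfl
        · exact hki rfl
        · exact hkj rfl
  have hedgeb : ∀ i j, (matGraph A).Adj i j → ∃ b ∈ L, b i ≠ 0 ∧ b j ≠ 0 := by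
    rintro i j ⟨hij, hAij⟩
    have hAij' : A i j ≠ 0 := by
      rcases hAij with h | h
      · exact h
      · rw [hAsymm]; exact h
    obtain ⟨b, hb, hbij⟩ : ∃ b ∈ L, b i * b j ≠ 0 :=
      mem_exists_ne_of_sum_ne (by rw [← hA]; exact hAij')
    exact ⟨b, hb, left_ne_zero_of_mul hbij, right_ne_zero_of_mul hbij⟩
  -- the canonical multiset
  set E : Finset (Sym2 (Fin n)) := (Set.toFinite (matGraph A).edgeSet).toFinset with hE
  have hmemE : ∀ e, e ∈ E ↔ e ∈ (matGraph A).edgeSet := fun e => Set.Finite.mem_toFinset _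
  have hcanon_supp : ∀ e ∈ (matGraph A).edgeSet, ∃ b ∈ L, b = canon A x e ∧
      (∀ k, b k ≠ 0 ↔ k ∈ e) := by
    intro e he
    induction e using Sym2.ind with
    | _ i j =>
      have hadj' : (matGraph A).Adj i j := ((matGraph A).mem_edgeSet).1 he
      have hij : i ≠ j := hadj'.ne
      obtain ⟨b, hb, hbi, hbj⟩ := hedgeb i j hadj'
      obtain ⟨hsuppb, _⟩ := hrel2 b hb i j hij hbi hbj
      refine ⟨b, hb, hbcanon b hb i j hij hbi hbj, fun k => ?_⟩
      rw [Sym2.mem_iff]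
      constructor
      · exact hsuppb k
      · rintro (rfl | rfl)
        · exact hbi
        · exact hbj
  have hmap_nodup : (E.val.map (canon A x)).Nodup := by
    refine Multiset.Nodup.map_on ?_ E.nodup
    intro e he e' he' heq
    obtain ⟨b, _, hb1, hb2⟩ := hcanon_supp e ((hmemE e).1 he)
    obtain ⟨b', _, hb1', hb2'⟩ := hcanon_supp e' ((hmemE e').1 he')
    have hbb : b = b' := by rw [hb1, hb1', heq]
    refine Sym2.ext (fun k => ?_)
    rw [← hb2 k, hbb, hb2' k]
  have hmem : ∀ v, v ∈ L ↔ v ∈ E.val.map (canon A x) := by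
    intro v
    constructor
    · intro hv
      obtain ⟨i, j, hij, hvi, hvj⟩ := hpairb v hv
      have hadj' : (matGraph A).Adj i j := hadj i j hij v hv hvi hvj
      refine Multiset.mem_map.2 ⟨s(i, j), ?_, ?_⟩
      · exact (hmemE _).2 (((matGraph A).mem_edgeSet).2 hadj')
      · exact (hbcanon v hv i j hij hvi hvj).symm
    · intro hv
      obtain ⟨e, he, rfl⟩ := Multiset.mem_map.1 hv
      obtain ⟨b, hb, hb1, _⟩ := hcanon_supp e ((hmemE e).1 he)
      rw [← hb1]
      exact hb
  exact (Multiset.Nodup.ext hnodup hmap_nodup).2 hmem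

/-- If `A` is irreducible completely positive with triangle free graph and `M(A)` is
singular, then `A` has a unique CP factorization, whose number of rank-one summands
equals the number of edges of `G(A)`. -/
theorem stmt_9 (n : ℕ) (hn : 2 ≤ n) (A : Matrix (Fin n) (Fin n) ℝ)
    (hCP : IsCP A) (hirr : (matGraph A).Connected) (htf : (matGraph A).CliqueFree 3)
    (hsing : (compMatrix A).det = 0) :
    (∃! L, IsCPRep A L) ∧
    ∀ L, IsCPRep A L → Multiset.card L = (matGraph A).edgeSet.ncard := by
  classical
  obtain ⟨x, hx, hker⟩ := Matrix.exists_mulVec_eq_zero_iff.2 hsing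
  obtain ⟨L₀, hL₀⟩ := hCP
  have hkey : ∀ L, IsCPRep A L →
      L = ((Set.toFinite (matGraph A).edgeSet).toFinset.val.map (canon A x)) :=
    fun L hL => key A hirr htf x hx hker L hL
  constructor
  · exact ⟨L₀, hL₀, fun L hL => (hkey L hL).trans (hkey L₀ hL₀).symm⟩
  · intro L hL
    rw [hkey L hL, Multiset.card_map]
    rw [Set.ncard_eq_toFinset_card _ (Set.toFinite _)]
    rfl
end
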